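/- Suppose a + b = c + d and n ≥ 2. Then for every integer m with 1 ≤ m ≤ n − 1, the power sums satisfy the recursive formula Σ_{i=1}^{2^n} x_i^m = 2 · Σ_{i=1}^{2^{n-1}} x_i^m + Σ_{t=1}^{m-1} binom(m, t) · k_n^t · Σ_{i=1}^{2^{n-1}} x_i^{m-t} + 2^{n-1} · k_n^m, where the first 2^{n-1} entries of x^{(n)} are the entries of x^{(n-1)}. -/

import Mathlib

/-- The pair of sequences `(x^{(t+1)}, y^{(t+1)})` of length `2^(t+1)` (0-based internal
level `t` corresponds to the paper's level `m = t + 1`).  `(seqXY a b c d k t i).1` is the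
`i`-th entry (0-based) of `x^{(t+1)}` and `.2` that of `y^{(t+1)}`. -/
noncomputable def seqXY (a b c d : ℝ) (k : ℕ → ℝ) : ℕ → ℕ → ℝ × ℝ
  | 0, i => if i = 0 then (a + k 1, c + k 1) else (b + k 1, d + k 1)
  | t + 1, i =>
      if i < 2 ^ (t + 1) then seqXY a b c d k t i
      else ((seqXY a b c d k t (i - 2 ^ (t + 1))).2 + k (t + 2),
            (seqXY a b c d k t (i - 2 ^ (t + 1))).1 + k (t + 2))

/-- `X a b c d k n i` is the entry `x_{i+1}` of the sequence `x^{(n)}` (for `n ≥ 1`,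
`0 ≤ i < 2^n`). -/
noncomputable def X (a b c d : ℝ) (k : ℕ → ℝ) (n i : ℕ) : ℝ :=
  (seqXY a b c d k (n - 1) i).1

/-- `Y a b c d k n i` is the entry `y_{i+1}` of the sequence `y^{(n)}` (for `n ≥ 1`,
`0 ≤ i < 2^n`). -/
noncomputable def Y (a b c d : ℝ) (k : ℕ → ℝ) (n i : ℕ) : ℝ :=
  (seqXY a b c d k (n - 1) i).2

lemma split_sum (a b c d : ℝ) (k : ℕ → ℝ) (t : ℕ) (f : ℝ × ℝ → ℝ) :
    ∑ i ∈ Finset.range (2 ^ (t + 2)), f (seqXY a b c d k (t + 1) i) =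
      ∑ i ∈ Finset.range (2 ^ (t + 1)), f (seqXY a b c d k t i) +
      ∑ i ∈ Finset.range (2 ^ (t + 1)),
        f ((seqXY a b c d k t i).2 + k (t + 2), (seqXY a b c d k t i).1 + k (t + 2)) := by
  have h2 : 2 ^ (t + 2) = 2 ^ (t + 1) + 2 ^ (t + 1) := by ring
  rw [h2, Finset.sum_range_add]
  congr 1
  · refine Finset.sum_congr rfl fun i hi => ?_
    rw [Finset.mem_range] at hi
    simp [seqXY, hi]
  · refine Finset.sum_congr rfl fun i hi => ?_
    have : ¬ (2 ^ (t + 1) + i < 2 ^ (t + 1)) := by omega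
    simp [seqXY, this]

lemma expand_pow_sum (N : ℕ) (z : ℕ → ℝ) (K : ℝ) (j : ℕ) :
    ∑ i ∈ Finset.range N, (z i + K) ^ j =
      ∑ s ∈ Finset.range (j + 1),
        (∑ i ∈ Finset.range N, z i ^ s) * K ^ (j - s) * (j.choose s : ℝ) := by
  simp_rw [add_pow]
  rw [Finset.sum_comm]
  refine Finset.sum_congr rfl fun s _ => ?_
  rw [Finset.sum_mul, Finset.sum_mul]

lemma key (a b c d : ℝ) (h : a + b = c + d) (k : ℕ → ℝ) :
    ∀ t, ∀ j ≤ t + 1,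
      ∑ i ∈ Finset.range (2 ^ (t + 1)), (seqXY a b c d k t i).1 ^ j =
      ∑ i ∈ Finset.range (2 ^ (t + 1)), (seqXY a b c d k t i).2 ^ j := by
  intro t
  induction t with
  | zero =>
    intro j hj
    interval_cases j
    · simp
    · show ∑ i ∈ Finset.range 2, _ = ∑ i ∈ Finset.range 2, _
      rw [Finset.sum_range_succ, Finset.sum_range_succ, Finset.sum_range_succ,
        Finset.sum_range_succ]
      simp [seqXY]
      linarith
  | succ t ih =>
    intro j hj
    rw [split_sum a b c d k t (fun p => p.1 ^ j), split_sum a b c d k t (fun p => p.2 ^ j)]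
    simp only
    rw [expand_pow_sum (2 ^ (t + 1)) (fun i => (seqXY a b c d k t i).2) (k (t + 2)) j,
      expand_pow_sum (2 ^ (t + 1)) (fun i => (seqXY a b c d k t i).1) (k (t + 2)) j,
      Finset.sum_range_succ, Finset.sum_range_succ]
    have hc : ∑ s ∈ Finset.range j,
        (∑ i ∈ Finset.range (2 ^ (t + 1)), (seqXY a b c d k t i).2 ^ s) *
          k (t + 2) ^ (j - s) * (j.choose s : ℝ) =
        ∑ s ∈ Finset.range j,
        (∑ i ∈ Finset.range (2 ^ (t + 1)), (seqXY a b c d k t i).1 ^ s) *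
          k (t + 2) ^ (j - s) * (j.choose s : ℝ) := by
      refine Finset.sum_congr rfl fun s hs => ?_
      rw [Finset.mem_range] at hs
      rw [ih s (by omega)]
    rw [hc]
    simp only [Nat.sub_self, pow_zero, Nat.choose_self, Nat.cast_one]
    ring

theorem power_sum_recursion (a b c d : ℝ) (h : a + b = c + d)
    (n : ℕ) (hn : 2 ≤ n) (k : ℕ → ℝ) (m : ℕ) (hm1 : 1 ≤ m) (hmn : m ≤ n - 1) :
    ∑ i ∈ Finset.range (2 ^ n), X a b c d k n i ^ m =
      2 * ∑ i ∈ Finset.range (2 ^ (n - 1)), X a b c d k (n - 1) i ^ m +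
        ∑ t ∈ Finset.Ico 1 m, (m.choose t : ℝ) * k n ^ t *
          ∑ i ∈ Finset.range (2 ^ (n - 1)), X a b c d k (n - 1) i ^ (m - t) +
        2 ^ (n - 1) * k n ^ m := by
  obtain ⟨t, rfl⟩ : ∃ t, n = t + 2 := ⟨n - 2, by omega⟩
  have hmt : m ≤ t + 1 := by omega
  simp only [X, show t + 2 - 1 = t + 1 from rfl, show t + 1 - 1 = t from rfl]
  rw [split_sum a b c d k t (fun p => p.1 ^ m)]
  simp only
  rw [expand_pow_sum (2 ^ (t + 1)) (fun i => (seqXY a b c d k t i).2) (k (t + 2)) m,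
    Finset.sum_range_succ, Finset.range_eq_Ico m,
    Finset.sum_eq_sum_Ico_succ_bot (show 0 < m by omega)]
  have hmid : ∑ s ∈ Finset.Ico (0 + 1) m,
      (∑ i ∈ Finset.range (2 ^ (t + 1)), (seqXY a b c d k t i).2 ^ s) *
        k (t + 2) ^ (m - s) * (m.choose s : ℝ) =
      ∑ s ∈ Finset.Ico 1 m,
      (∑ i ∈ Finset.range (2 ^ (t + 1)), (seqXY a b c d k t i).1 ^ s) *
        k (t + 2) ^ (m - s) * (m.choose s : ℝ) := by
    refine Finset.sum_congr (by norm_num) fun s hs => ?_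
    rw [Finset.mem_Ico] at hs
    rw [key a b c d h k t s (by omega)]
  have hrefl : ∑ s ∈ Finset.Ico 1 m, (m.choose s : ℝ) * k (t + 2) ^ s *
      ∑ i ∈ Finset.range (2 ^ (t + 1)), (seqXY a b c d k t i).1 ^ (m - s) =
      ∑ s ∈ Finset.Ico 1 m,
      (∑ i ∈ Finset.range (2 ^ (t + 1)), (seqXY a b c d k t i).1 ^ s) *
        k (t + 2) ^ (m - s) * (m.choose s : ℝ) := by
    have h1 : ∀ s ∈ Finset.Ico 1 m, (m.choose s : ℝ) * k (t + 2) ^ s *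
        ∑ i ∈ Finset.range (2 ^ (t + 1)), (seqXY a b c d k t i).1 ^ (m - s) =
        (fun j => (∑ i ∈ Finset.range (2 ^ (t + 1)), (seqXY a b c d k t i).1 ^ j) *
          k (t + 2) ^ (m - j) * (m.choose j : ℝ)) (m - s) := by
      intro s hs
      rw [Finset.mem_Ico] at hs
      have e1 : m - (m - s) = s := by omega
      have e2 : m.choose (m - s) = m.choose s := Nat.choose_symm (by omega)
      simp only [e1, e2]
      ring
    rw [Finset.sum_congr rfl h1,
      Finset.sum_Ico_reflect (fun j => (∑ i ∈ Finset.range (2 ^ (t + 1)),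
        (seqXY a b c d k t i).1 ^ j) * k (t + 2) ^ (m - j) * (m.choose j : ℝ)) 1
        (show m ≤ m + 1 by omega), show m + 1 - m = 1 by omega, Nat.add_sub_cancel]
  have hym : ∑ i ∈ Finset.range (2 ^ (t + 1)), (seqXY a b c d k t i).2 ^ m =
      ∑ i ∈ Finset.range (2 ^ (t + 1)), (seqXY a b c d k t i).1 ^ m :=
    (key a b c d h k t m hmt).symm
  rw [hmid, hrefl, hym]
  simp only [Nat.sub_zero, pow_zero, Nat.choose_zero_right, Nat.cast_one, Nat.sub_self,
    Nat.choose_self, Finset.sum_const, Finset.card_range, nsmul_eq_mul]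
  push_cast
  ring
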